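/- Let N be a binary unrooted phylogenetic network on X containing a pendant level-1 blob B whose attached leaves form exactly the chain a = (a_1,...,a_k), and let N' be obtained by replacing B (including its leaves) by a single new leaf z attached at the endpoint of the non-trivial cut-edge. Then for all leaves p,q ∈ X not in the chain a: d^{N'}_m(p,q) = d^N_m(p,q) and d^{N'}_l(p,q) = d^N_l(p,q); moreover d^{N'}_m(p,z) = d^N_m(p,a) − 2 and d^{N'}_l(p,z) = d^N_l(p,a) − (k+1), where d^N_m(p,a) = min_i d^N_m(p,a_i) and d^N_l(p,a) = max_i d^N_l(p,a_i). -/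

import Mathlib

open SimpleGraph

/-- The degree of a vertex (defined without decidability assumptions). -/
noncomputable def gdeg {V : Type} (G : SimpleGraph V) (v : V) : ℕ :=
  {u | G.Adj v u}.ncard

/-- The longest distance between two vertices: the supremum of the lengths of
paths between them. -/
noncomputable def ldistV {V : Type} (G : SimpleGraph V) (u v : V) : ℕ :=
  sSup {n | ∃ p : G.Walk u v, p.IsPath ∧ p.length = n}

/-- A binary unrooted phylogenetic network on the leaf-label set `X`:
a simple connected graph whose degree-1 vertices (the leaves) are bijectively
labelled by `X`, every other vertex having degree 3, with at least two leaves. -/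
structure PhyloNet (V X : Type) where
  G : SimpleGraph V
  conn : G.Connected
  leaf : X → V
  leafInj : Function.Injective leaf
  leafDeg : ∀ x : X, gdeg G (leaf x) = 1
  internalDeg : ∀ v : V, v ∉ Set.range leaf → gdeg G v = 3
  leafSurj : ∀ v : V, gdeg G v = 1 → v ∈ Set.range leaf
  twoLeaves : Nontrivial X

namespace PhyloNet

variable {V W X : Type}

/-- Shortest distance between two leaves. -/
noncomputable def dm (N : PhyloNet V X) (x y : X) : ℕ :=
  N.G.dist (N.leaf x) (N.leaf y)

/-- Longest distance between two leaves. -/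
noncomputable def dl (N : PhyloNet V X) (x y : X) : ℕ :=
  ldistV N.G (N.leaf x) (N.leaf y)

/-- Two networks on the same label set realize the same shortest distance matrix. -/
def SameDist (N : PhyloNet V X) (M : PhyloNet W X) : Prop :=
  ∀ x y : X, N.dm x y = M.dm x y

/-- Two networks realize the same longest distance matrix. -/
def SameLDist (N : PhyloNet V X) (M : PhyloNet W X) : Prop :=
  ∀ x y : X, N.dl x y = M.dl x y

/-- Label-preserving isomorphism of networks. -/
def Isom (N : PhyloNet V X) (M : PhyloNet W X) : Prop :=
  ∃ φ : N.G ≃g M.G, ∀ x : X, φ (N.leaf x) = M.leaf x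

/-- `N` is reconstructible from its shortest distance matrix. -/
def Reconstructible (N : PhyloNet V X) : Prop :=
  ∀ (W : Type) (M : PhyloNet W X), N.SameDist M → N.Isom M

/-- Two leaves form a cherry: they share a common neighbour. -/
def Cherry (N : PhyloNet V X) (x y : X) : Prop :=
  x ≠ y ∧ ∃ v : V, N.G.Adj (N.leaf x) v ∧ N.G.Adj (N.leaf y) v

def NoCherry (N : PhyloNet V X) : Prop := ∀ x y : X, ¬ N.Cherry x y

/-- `uv` is a cut-edge. -/
def IsCutEdge (N : PhyloNet V X) (u v : V) : Prop :=
  N.G.Adj u v ∧ ¬ (N.G.deleteEdges {s(u, v)}).Reachable u v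

/-- Leaf `x` lies on the `u`-side of the cut-edge `uv`. -/
def leafSide (N : PhyloNet V X) (u v : V) (x : X) : Prop :=
  (N.G.deleteEdges {s(u, v)}).Reachable (N.leaf x) u

/-- `A` is a part of a cut-edge induced split of `N`. -/
def IsSplitPart (N : PhyloNet V X) (A : Set X) : Prop :=
  ∃ u v : V, N.IsCutEdge u v ∧ ∀ x : X, N.leafSide u v x ↔ x ∈ A

/-- Every cut-edge of `N` induces a unique split. -/
def UniqueSplits (N : PhyloNet V X) : Prop :=
  ∀ u v u' v' : V, N.IsCutEdge u v → N.IsCutEdge u' v' →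
    ((∀ x : X, N.leafSide u v x ↔ N.leafSide u' v' x) ∨
      (∀ x : X, N.leafSide u v x ↔ N.leafSide v' u' x)) →
    s(u, v) = s(u', v')

/-- `l` is a chain of leaves: the neighbours of its members form a path. -/
def IsChain (N : PhyloNet V X) (l : List X) : Prop :=
  l ≠ [] ∧ ∃ vs : List V, ∃ h : vs.length = l.length,
    vs.Nodup ∧ List.Chain' N.G.Adj vs ∧
    ∀ (i : ℕ) (hi : i < l.length),
      N.G.Adj (N.leaf (l.get ⟨i, hi⟩)) (vs.get ⟨i, by omega⟩)

/-- A maximal chain: not a subsequence of any other chain. -/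
def MaxChain (N : PhyloNet V X) (l : List X) : Prop :=
  N.IsChain l ∧ ∀ m : List X, N.IsChain m → l.Sublist m → m = l

end PhyloNet

/-- A set of at least three vertices is 2-connected if it induces a connected
graph that stays connected after removal of any single vertex. -/
def TwoConn {V : Type} (G : SimpleGraph V) (B : Set V) : Prop :=
  3 ≤ B.ncard ∧ (G.induce B).Connected ∧
    ∀ v ∈ B, (G.induce (B \ {v})).Connected

/-- A blob: a maximal 2-connected set of vertices (with at least three vertices). -/
def IsBlob {V : Type} (G : SimpleGraph V) (B : Set V) : Prop :=
  TwoConn G B ∧ ∀ C : Set V, TwoConn G C → B ⊆ C → C = B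

/-- Number of edges with both endpoints in `B`. -/
noncomputable def edgesIn {V : Type} (G : SimpleGraph V) (B : Set V) : ℕ :=
  {e : Sym2 V | e ∈ G.edgeSet ∧ ∀ v ∈ e, v ∈ B}.ncard

/-- `G` is a level-(≤ k) network: every blob has cycle rank at most `k`,
i.e. removing at most `k` edges from each blob yields a tree. -/
def LevelLE {V : Type} (G : SimpleGraph V) (k : ℕ) : Prop :=
  ∀ B : Set V, IsBlob G B → edgesIn G B ≤ (B.ncard - 1) + k

namespace PhyloNet

variable {V X : Type}

/-- A trivial cut-edge is one incident to a leaf. -/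
def TrivialCutEdge (N : PhyloNet V X) (u v : V) : Prop :=
  u ∈ Set.range N.leaf ∨ v ∈ Set.range N.leaf

/-- A pendant blob: a blob incident to exactly one non-trivial cut-edge. -/
def IsPendantBlob (N : PhyloNet V X) (B : Set V) : Prop :=
  IsBlob N.G B ∧
    ∃! e : Sym2 V, ∃ u v : V, e = s(u, v) ∧ u ∈ B ∧ v ∉ B ∧
      N.G.Adj u v ∧ ¬ N.TrivialCutEdge u v

/-- The leaves attached to (contained in) a blob. -/
def blobLeaves (N : PhyloNet V X) (B : Set V) : Set X :=
  {x : X | ∃ u ∈ B, N.G.Adj (N.leaf x) u}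

/-- `N` has a leaf on each generator side: every vertex is within shortest
distance 2 of some leaf. -/
def LeafOnEachGenSide (N : PhyloNet V X) : Prop :=
  ∀ v : V, ∃ x : X, N.G.dist v (N.leaf x) ≤ 2

end PhyloNet

section AuxLemmas

lemma lift_walk {V : Type} {G : SimpleGraph V} {S : Set V} :
    ∀ {x y : V} (q : G.Walk x y) (hx : x ∈ S) (hy : y ∈ S)
      (_ : ∀ z ∈ q.support, z ∈ S),
    ∃ q' : (G.induce S).Walk ⟨x, hx⟩ ⟨y, hy⟩,
      q'.length = q.length ∧ q'.support.map Subtype.val = q.support := by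
  intro x y q
  induction q with
  | nil =>
    intro hx hy _
    exact ⟨Walk.nil, rfl, rfl⟩
  | @cons x u y h q ih =>
    intro hx hy hs
    have hu : u ∈ S := hs u (by simp)
    obtain ⟨q', hl, hsup⟩ := ih hu hy (fun z hz => hs z (by simp [hz]))
    refine ⟨Walk.cons (by exact h) q', by exact congrArg (· + 1) hl, by exact congrArg (List.cons x) hsup⟩

lemma down_walk {V : Type} {G : SimpleGraph V} {S : Set V} :
    ∀ (x y : S) (q : (G.induce S).Walk x y),
    ∃ q0 : G.Walk x.val y.val, q0.length = q.length ∧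
      q0.support = q.support.map Subtype.val := by
  intro x y q
  induction q with
  | nil => exact ⟨Walk.nil, rfl, rfl⟩
  | @cons x u y h q ih =>
    obtain ⟨q0, hl, hsup⟩ := ih
    exact ⟨Walk.cons (by exact h) q0, by exact congrArg (· + 1) hl, by exact congrArg (List.cons x.val) hsup⟩

lemma lengthSet_eq {V : Type} {G : SimpleGraph V} {S : Set V}
    (hS : ∀ x y : V, x ∈ S → y ∈ S → ∀ q : G.Walk x y, q.IsPath →
      ∀ z ∈ q.support, z ∈ S)
    {x y : V} (hx : x ∈ S) (hy : y ∈ S) :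
    {n | ∃ q : (G.induce S).Walk ⟨x, hx⟩ ⟨y, hy⟩, q.IsPath ∧ q.length = n}
      = {n | ∃ q : G.Walk x y, q.IsPath ∧ q.length = n} := by
  ext n
  constructor
  · rintro ⟨q, hq, rfl⟩
    obtain ⟨q0, hl, hsup⟩ := down_walk _ _ q
    refine ⟨q0, ?_, hl⟩
    rw [Walk.isPath_def] at hq ⊢
    rw [hsup]
    exact hq.map Subtype.val_injective
  · rintro ⟨q, hq, rfl⟩
    obtain ⟨q', hl, hsup⟩ := lift_walk q hx hy (hS x y hx hy q hq)
    refine ⟨q', ?_, hl⟩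
    rw [Walk.isPath_def] at hq ⊢
    exact List.Nodup.of_map Subtype.val (hsup ▸ hq)

lemma induce_dist_eq {V : Type} {G : SimpleGraph V} {S : Set V}
    (hconn : G.Connected)
    (hS : ∀ x y : V, x ∈ S → y ∈ S → ∀ q : G.Walk x y, q.IsPath →
      ∀ z ∈ q.support, z ∈ S)
    {x y : V} (hx : x ∈ S) (hy : y ∈ S) :
    (G.induce S).dist ⟨x, hx⟩ ⟨y, hy⟩ = G.dist x y := by
  obtain ⟨π, hπp, hπl⟩ := hconn.exists_path_of_dist x y
  obtain ⟨q', hl, _⟩ := lift_walk π hx hy (hS x y hx hy π hπp)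
  apply le_antisymm
  · exact hπl ▸ hl ▸ SimpleGraph.dist_le q'
  · have hr : (G.induce S).Reachable ⟨x, hx⟩ ⟨y, hy⟩ := ⟨q'⟩
    obtain ⟨ρ, hρ⟩ := hr.exists_walk_length_eq_dist
    obtain ⟨q0, hl0, _⟩ := down_walk _ _ ρ
    exact hρ ▸ hl0 ▸ SimpleGraph.dist_le q0

section Blob
variable {V X : Type} {G : SimpleGraph V} {k : ℕ} {w : V} {v : Fin k → V} {lf : Fin k → V}

variable (hclosed : ∀ (i : Fin k) (u : V), G.Adj (v i) u →
      u = lf i ∨ (((i : ℕ) = 0 ∨ (i : ℕ) + 1 = k) ∧ u = w) ∨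
        ∃ j : Fin k, (((j : ℕ) + 1 = (i : ℕ)) ∨ ((i : ℕ) + 1 = (j : ℕ))) ∧ u = v j)
  (hnbr : ∀ (i : Fin k) {u : V}, G.Adj (lf i) u → u = v i)

include hclosed hnbr

/-- any walk from a blob vertex to a vertex outside the blob passes through w -/
lemma claimC : ∀ {x y : V} (q : G.Walk x y),
    ((∃ i, x = v i) ∨ (∃ i, x = lf i)) →
    ((∀ i, y ≠ v i) ∧ ∀ i, y ≠ lf i) → w ∈ q.support := by
  intro x y q
  induction q with
  | nil =>
    rintro (⟨i, rfl⟩ | ⟨i, rfl⟩) hy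
    · exact absurd rfl (hy.1 i)
    · exact absurd rfl (hy.2 i)
  | @cons x u y h q ih =>
    rintro (⟨i, rfl⟩ | ⟨i, rfl⟩) hy
    · rcases hclosed i u h with rfl | ⟨_, rfl⟩ | ⟨j, _, rfl⟩
      · exact List.mem_cons_of_mem _ (ih (Or.inr ⟨i, rfl⟩) hy)
      · exact List.mem_cons_of_mem _ q.start_mem_support
      · exact List.mem_cons_of_mem _ (ih (Or.inl ⟨j, rfl⟩) hy)
    · have := hnbr i h
      subst this
      exact List.mem_cons_of_mem _ (ih (Or.inl ⟨i, rfl⟩) hy)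

/-- a path between outside vertices stays outside -/
lemma pathInS : ∀ {x y : V} (q : G.Walk x y), q.IsPath →
    ((∀ i, x ≠ v i) ∧ ∀ i, x ≠ lf i) → ((∀ i, y ≠ v i) ∧ ∀ i, y ≠ lf i) →
    ∀ z ∈ q.support, (∀ i, z ≠ v i) ∧ ∀ i, z ≠ lf i := by
  intro x y q
  induction q with
  | nil =>
    intro _ hx _ z hz
    simp only [Walk.support_nil, List.mem_singleton] at hz
    exact hz ▸ hx
  | @cons x u y h q ih =>
    intro hp hx hy z hz
    simp only [Walk.support_cons, List.mem_cons] at hz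
    rcases hz with rfl | hz
    · exact hx
    by_cases hu : (∃ i, u = v i) ∨ ∃ i, u = lf i
    · exfalso
      have hxw : x = w := by
        rcases hu with ⟨i, rfl⟩ | ⟨i, rfl⟩
        · rcases hclosed i x h.symm with rfl | ⟨_, rfl⟩ | ⟨j, _, rfl⟩
          · exact absurd rfl (hx.2 i)
          · rfl
          · exact absurd rfl (hx.1 j)
        · exact absurd (hnbr i h.symm) (hx.1 i)
      subst hxw
      rw [Walk.cons_isPath_iff] at hp
      exact hp.2 (claimC hclosed hnbr q hu hy)
    · push_neg at hu
      exact ih hp.of_cons hu hy z hz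

end Blob

section Blob2
variable {V : Type} {G : SimpleGraph V} {k : ℕ} {w : V} {v : Fin k → V} {lf : Fin k → V}

variable (hk : 2 ≤ k)
  (hvinj : Function.Injective v) (hvw : ∀ i, v i ≠ w)
  (hw0 : G.Adj w (v ⟨0, Nat.lt_of_lt_of_le Nat.two_pos hk⟩))
  (hwl : G.Adj w (v ⟨k - 1, Nat.sub_lt (Nat.lt_of_lt_of_le Nat.two_pos hk) Nat.one_pos⟩))
  (hchain : ∀ (i : ℕ) (hi : i + 1 < k), G.Adj (v ⟨i, Nat.lt_of_succ_lt hi⟩) (v ⟨i + 1, hi⟩))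
  (hclosed : ∀ (i : Fin k) (u : V), G.Adj (v i) u →
      u = lf i ∨ (((i : ℕ) = 0 ∨ (i : ℕ) + 1 = k) ∧ u = w) ∨
        ∃ j : Fin k, (((j : ℕ) + 1 = (i : ℕ)) ∨ ((i : ℕ) + 1 = (j : ℕ))) ∧ u = v j)
  (hnbr : ∀ (i : Fin k) {u : V}, G.Adj (lf i) u → u = v i)
  (hwa : ∀ i, w ≠ lf i)

include hk hvinj hvw hw0 hwl hchain hnbr in
lemma vleaf : ∀ (i j : Fin k), lf i ≠ v j := by
  intro i j heq
  have hnb : ∀ u, G.Adj (v j) u → u = v i := by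
    intro u hu
    rw [← heq] at hu
    exact hnbr i hu
  by_cases hj0 : (j : ℕ) = 0
  · have hj' : j = ⟨0, by omega⟩ := by ext; simp [hj0]
    have : w = v i := hnb w (by rw [hj']; exact hw0.symm)
    exact hvw i this.symm
  by_cases hjk : (j : ℕ) + 1 = k
  · have hj' : j = ⟨k - 1, by omega⟩ := by ext; simp; omega
    have : w = v i := hnb w (by rw [hj']; exact hwl.symm)
    exact hvw i this.symm
  · have h1 : G.Adj (v j) (v ⟨(j : ℕ) + 1, by omega⟩) := by
      exact hchain (j : ℕ) (by omega)
    have h2 : G.Adj (v j) (v ⟨(j : ℕ) - 1, by omega⟩) := by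
      have := (hchain ((j : ℕ) - 1) (by omega)).symm
      convert this using 2 <;> (ext; simp; omega)
    have e1 := hnb _ h1
    have e2 := hnb _ h2
    have := hvinj (e1.trans e2.symm)
    rw [Fin.mk.injEq] at this
    omega

include hvw hclosed hnbr hwa in
lemma claimD : ∀ (n : ℕ) (j : ℕ) (hj : j < k) (q : G.Walk (v ⟨j, hj⟩) w),
    q.length = n → q.IsPath →
    ((∀ h1 : j + 1 < k, v ⟨j + 1, h1⟩ ∉ q.support → q.length = j + 1) ∧
     (1 ≤ j → v ⟨j - 1, by omega⟩ ∉ q.support → q.length = k - j) ∧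
     (q.length = j + 1 ∨ q.length = k - j)) := by
  intro n
  induction n using Nat.strong_induction_on with
  | _ n ih =>
    intro j hj q hlen hp
    obtain ⟨u, h, q', rfl⟩ := Walk.exists_eq_cons_of_ne (hvw ⟨j, hj⟩) q
    rcases hclosed ⟨j, hj⟩ u h with rfl | ⟨hj0, rfl⟩ | ⟨jf, hjf, rfl⟩
    · -- stepped to the leaf: dead end, contradiction
      exfalso
      obtain ⟨u', h', q'', rfl⟩ :=
        Walk.exists_eq_cons_of_ne (Ne.symm (hwa ⟨j, hj⟩)) q'
      have hu' : u' = v ⟨j, hj⟩ := hnbr _ h'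
      subst hu'
      rw [Walk.cons_isPath_iff] at hp
      exact hp.2 (by simp)
    · -- stepped to w
      simp only [Fin.val_mk] at hj0
      have hq' : q' = Walk.nil := Walk.isPath_iff_eq_nil.mp hp.of_cons
      subst hq'
      rcases hj0 with hj0 | hj0
      · subst hj0
        exact ⟨fun _ _ => by simp, fun h1 _ => by omega, Or.inl (by simp)⟩
      · refine ⟨fun h1 _ => by omega, fun _ _ => by simp; omega, Or.inr (by simp; omega)⟩
    · -- stepped to a cycle neighbour
      simp only [Fin.val_mk] at hjf
      have hlen' : q'.length = n - 1 := by simp at hlen; omega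
      have hn1 : n - 1 < n := by simp at hlen; omega
      have IH := ih (n - 1) hn1 (jf : ℕ) jf.isLt q' (by simpa using hlen') hp.of_cons
      rw [Walk.cons_isPath_iff] at hp
      rcases hjf with hd | hd
      · -- jf = j - 1 : stepping down
        have h1 : (jf : ℕ) + 1 < k := by omega
        have hvv : v ⟨(jf : ℕ) + 1, h1⟩ = v ⟨j, hj⟩ := by congr 1; ext; simp [hd]
        have hq' : q'.length = (jf : ℕ) + 1 := IH.1 h1 (by rw [hvv]; exact hp.2)
        have hlq : (Walk.cons h q').length = j + 1 := by simp [hq', hd]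
        refine ⟨fun _ _ => hlq, fun hj1 hns => ?_, Or.inl hlq⟩
        exfalso
        apply hns
        have : v ⟨j - 1, by omega⟩ = v jf := by congr 1; ext; simp; omega
        rw [this]
        simp
      · -- jf = j + 1 : stepping up
        have h2 : 1 ≤ (jf : ℕ) := by omega
        have hvv : v ⟨(jf : ℕ) - 1, by omega⟩ = v ⟨j, hj⟩ := by congr 1; ext; simp; omega
        have hq' : q'.length = k - (jf : ℕ) := IH.2.1 h2 (by rw [hvv]; exact hp.2)
        have hlq : (Walk.cons h q').length = k - j := by
          have := jf.isLt; simp [hq']; omega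
        refine ⟨fun hlt hns => ?_, fun _ _ => hlq, Or.inr hlq⟩
        exfalso
        apply hns
        have : v ⟨j + 1, hlt⟩ = v jf := by congr 1; ext; simp; omega
        rw [this]
        simp

end Blob2

section Blob3
variable {V : Type} {G : SimpleGraph V} {k : ℕ} {w : V} {v : Fin k → V} {lf : Fin k → V}

variable (hk : 2 ≤ k)
  (hvinj : Function.Injective v) (hvw : ∀ i, v i ≠ w)
  (hwl : G.Adj w (v ⟨k - 1, Nat.sub_lt (Nat.lt_of_lt_of_le Nat.two_pos hk) Nat.one_pos⟩))
  (hchain : ∀ (i : ℕ) (hi : i + 1 < k), G.Adj (v ⟨i, Nat.lt_of_succ_lt hi⟩) (v ⟨i + 1, hi⟩))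
  (hleaf : ∀ i : Fin k, G.Adj (lf i) (v i))
  (hwa : ∀ i, w ≠ lf i)
  (hvl : ∀ i j : Fin k, lf i ≠ v j)

include hvinj hchain in
lemma walkVD : ∀ (i j : ℕ) (hi : i < k) (hj : j < k) (hij : i ≤ j),
    ∃ q : G.Walk (v ⟨j, hj⟩) (v ⟨i, hi⟩), q.length = j - i ∧ q.IsPath ∧
      ∀ z ∈ q.support, ∃ (m : ℕ) (hm : m < k), i ≤ m ∧ m ≤ j ∧ z = v ⟨m, hm⟩ := by
  intro i j hi
  induction j with
  | zero =>
    intro hj hij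
    have : i = 0 := by omega
    subst this
    refine ⟨Walk.nil, by simp, by simp, ?_⟩
    intro z hz
    simp only [Walk.support_nil, List.mem_singleton] at hz
    exact ⟨0, hi, le_refl _, le_refl _, hz⟩
  | succ j ihj =>
    intro hj hij
    by_cases hij' : i = j + 1
    · subst hij'
      refine ⟨Walk.nil, by simp, by simp, ?_⟩
      intro z hz
      simp only [Walk.support_nil, List.mem_singleton] at hz
      exact ⟨j + 1, hi, le_refl _, le_refl _, hz⟩
    · obtain ⟨q, hql, hqp, hqs⟩ := ihj (by omega) (by omega)
      refine ⟨Walk.cons (hchain j (by omega)).symm q, by simp [hql]; omega, ?_, ?_⟩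
      · rw [Walk.cons_isPath_iff]
        refine ⟨hqp, fun hmem => ?_⟩
        obtain ⟨m, hm, him, hmj, hz⟩ := hqs _ hmem
        have := hvinj hz.symm
        rw [Fin.mk.injEq] at this
        omega
      · intro z hz
        simp only [Walk.support_cons, List.mem_cons] at hz
        rcases hz with rfl | hz
        · exact ⟨j + 1, hj, by omega, le_refl _, rfl⟩
        · obtain ⟨m, hm, him, hmj, hz⟩ := hqs _ hz
          exact ⟨m, hm, him, by omega, hz⟩

include hk hvinj hvw hwl hchain hleaf hwa hvl in
lemma EWalk : ∀ i : Fin k, ∃ E : G.Walk w (lf i),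
    E.length = k - (i : ℕ) + 1 ∧ E.IsPath ∧
      ∀ z ∈ E.support, z = w ∨ (∃ m, z = v m) ∨ z = lf i := by
  intro i
  obtain ⟨q, hql, hqp, hqs⟩ := walkVD hvinj hchain (i : ℕ) (k - 1) i.isLt (by omega) (by omega)
  have hlfq : lf i ∉ q.support := by
    intro hmem
    obtain ⟨m, hm, _, _, hz⟩ := hqs _ hmem
    exact hvl i ⟨m, hm⟩ hz
  refine ⟨Walk.cons hwl (q.append (Walk.cons (hleaf i).symm Walk.nil)), ?_, ?_, ?_⟩
  · have := i.isLt
    simp [hql]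
    omega
  · rw [Walk.cons_isPath_iff]
    constructor
    · rw [Walk.isPath_def, Walk.support_append]
      simp only [Walk.support_cons, Walk.support_nil, List.tail_cons]
      rw [List.nodup_append]
      refine ⟨(Walk.isPath_def _).mp hqp, List.nodup_singleton _, ?_⟩
      intro z hz b hb hzb
      simp only [List.mem_singleton] at hb
      subst hzb
      subst hb
      exact hlfq hz
    · rw [Walk.mem_support_append_iff]
      rintro (hmem | hmem)
      · obtain ⟨m, hm, _, _, hz⟩ := hqs _ hmem
        exact hvw ⟨m, hm⟩ hz.symm
      · simp only [Walk.support_cons, Walk.support_nil, List.mem_cons,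
          List.mem_singleton] at hmem
        rcases hmem with hmem | hmem | hmem
        · exact hvw i hmem.symm
        · exact hwa i hmem
        · exact absurd hmem List.not_mem_nil
  · intro z hz
    simp only [Walk.support_cons, List.mem_cons] at hz
    rcases hz with rfl | hz
    · exact Or.inl rfl
    rw [Walk.mem_support_append_iff] at hz
    rcases hz with hz | hz
    · obtain ⟨m, hm, _, _, hzz⟩ := hqs _ hz
      exact Or.inr (Or.inl ⟨⟨m, hm⟩, hzz⟩)
    · simp only [Walk.support_cons, Walk.support_nil, List.mem_cons,
        List.mem_singleton] at hz
      rcases hz with hz | hz | hz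
      · exact Or.inr (Or.inl ⟨i, hz⟩)
      · exact Or.inr (Or.inr hz)
      · exact absurd hz List.not_mem_nil

end Blob3

end AuxLemmas

/-- distances after replacing a pendant level-1 blob
(cycle `w, v_0, …, v_{k-1}` carrying the chain `(a_0, …, a_{k-1})`) by a single
leaf `z` (the vertex `w`, which becomes a leaf in the induced graph). -/
theorem replace_pendant_level1_blob_dist {V X : Type} (N : PhyloNet V X)
    (k : ℕ) (hk : 2 ≤ k)
    (w : V) (v : Fin k → V) (a : Fin k → X)
    (hvinj : Function.Injective v) (hvw : ∀ i, v i ≠ w)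
    (hainj : Function.Injective a)
    (hw0 : N.G.Adj w (v ⟨0, by omega⟩))
    (hwl : N.G.Adj w (v ⟨k - 1, by omega⟩))
    (hchain : ∀ (i : ℕ) (hi : i + 1 < k),
      N.G.Adj (v ⟨i, by omega⟩) (v ⟨i + 1, hi⟩))
    (hleaf : ∀ i : Fin k, N.G.Adj (N.leaf (a i)) (v i))
    (hclosed : ∀ (i : Fin k) (u : V), N.G.Adj (v i) u →
      u = N.leaf (a i) ∨ (((i : ℕ) = 0 ∨ (i : ℕ) + 1 = k) ∧ u = w) ∨
        ∃ j : Fin k, (((j : ℕ) + 1 = (i : ℕ)) ∨ ((i : ℕ) + 1 = (j : ℕ))) ∧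
          u = v j)
    (hnt : ∃ t : V, N.G.Adj w t ∧ t ∉ Set.range v ∧ t ∉ Set.range N.leaf)
    (hwS : w ∈ {r : V | (∀ i, r ≠ v i) ∧ ∀ i, r ≠ N.leaf (a i)}) :
    ∀ p q : X, (∀ i, p ≠ a i) → (∀ i, q ≠ a i) →
      ∀ (hp : N.leaf p ∈ {r : V | (∀ i, r ≠ v i) ∧ ∀ i, r ≠ N.leaf (a i)})
        (hq : N.leaf q ∈ {r : V | (∀ i, r ≠ v i) ∧ ∀ i, r ≠ N.leaf (a i)}),
        (N.G.induce {r : V | (∀ i, r ≠ v i) ∧ ∀ i, r ≠ N.leaf (a i)}).dist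
            ⟨N.leaf p, hp⟩ ⟨N.leaf q, hq⟩ = N.dm p q ∧
        ldistV (N.G.induce {r : V | (∀ i, r ≠ v i) ∧ ∀ i, r ≠ N.leaf (a i)})
            ⟨N.leaf p, hp⟩ ⟨N.leaf q, hq⟩ = N.dl p q ∧
        (N.G.induce {r : V | (∀ i, r ≠ v i) ∧ ∀ i, r ≠ N.leaf (a i)}).dist
            ⟨N.leaf p, hp⟩ ⟨w, hwS⟩ = (⨅ i : Fin k, N.dm p (a i)) - 2 ∧
        ldistV (N.G.induce {r : V | (∀ i, r ≠ v i) ∧ ∀ i, r ≠ N.leaf (a i)})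
            ⟨N.leaf p, hp⟩ ⟨w, hwS⟩ = (⨆ i : Fin k, N.dl p (a i)) - (k + 1) := by

  classical
  haveI : Nonempty (Fin k) := ⟨⟨0, by omega⟩⟩
  set S : Set V := {r : V | (∀ i, r ≠ v i) ∧ ∀ i, r ≠ N.leaf (a i)} with hSdef
  have hnbr : ∀ (i : Fin k) {u : V}, N.G.Adj (N.leaf (a i)) u → u = v i := by
    intro i u h
    obtain ⟨b, hb⟩ := Set.ncard_eq_one.mp (N.leafDeg (a i))
    have h1 : v i ∈ {u | N.G.Adj (N.leaf (a i)) u} := hleaf i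
    have h2 : u ∈ {u | N.G.Adj (N.leaf (a i)) u} := h
    rw [hb] at h1 h2
    simp only [Set.mem_singleton_iff] at h1 h2
    rw [h2, h1]
  have hwa : ∀ i, w ≠ N.leaf (a i) := hwS.2
  have hvl : ∀ i j : Fin k, N.leaf (a i) ≠ v j :=
    vleaf hk hvinj hvw hw0 hwl hchain hnbr
  have hS : ∀ x y : V, x ∈ S → y ∈ S → ∀ q : N.G.Walk x y, q.IsPath →
      ∀ z ∈ q.support, z ∈ S :=
    fun x y hx hy q hq => pathInS hclosed hnbr q hq hx hy
  intro p q hpa hqa hp hq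
  refine ⟨induce_dist_eq N.conn hS hp hq, congrArg sSup (lengthSet_eq hS hp hq), ?_, ?_⟩
  · -- shortest distance to w
    have hd := induce_dist_eq N.conn hS hp hwS
    have hmin : (⨅ i : Fin k, N.dm p (a i)) = N.G.dist (N.leaf p) w + 2 := by
      apply le_antisymm
      · refine le_trans (ciInf_le (OrderBot.bddBelow _) ⟨0, by omega⟩) ?_
        obtain ⟨π, hπ⟩ := N.conn.exists_walk_length_eq_dist (N.leaf p) w
        have hle := SimpleGraph.dist_le
          (π.append (Walk.cons hw0 (Walk.cons (hleaf ⟨0, by omega⟩).symm Walk.nil)))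
        simp only [Walk.length_append, Walk.length_cons, Walk.length_nil, hπ] at hle
        exact hle
      · refine le_ciInf fun i => ?_
        obtain ⟨π, hπp, hπl⟩ := N.conn.exists_path_of_dist (N.leaf p) (N.leaf (a i))
        have hwmem : w ∈ π.support := by
          have := claimC hclosed hnbr π.reverse (Or.inr ⟨i, rfl⟩) hp
          rwa [Walk.support_reverse, List.mem_reverse] at this
        have hsum : (π.takeUntil w hwmem).length + (π.dropUntil w hwmem).length
            = π.length := by
          have := congrArg Walk.length (π.take_spec hwmem)
          rwa [Walk.length_append] at this
        have h1 : N.G.dist (N.leaf p) w ≤ (π.takeUntil w hwmem).length :=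
          SimpleGraph.dist_le _
        have h2 : 2 ≤ (π.dropUntil w hwmem).length := by
          obtain ⟨u1, hadj1, r1, hr1⟩ :=
            Walk.exists_eq_cons_of_ne (hwa i) (π.dropUntil w hwmem)
          by_cases hu1 : u1 = N.leaf (a i)
          · exfalso
            subst hu1
            exact hvw i (hnbr i hadj1.symm).symm
          · obtain ⟨u2, hadj2, r2, hr2⟩ := Walk.exists_eq_cons_of_ne hu1 r1
            rw [hr1, hr2]
            simp only [Walk.length_cons]
            omega
        have hdm : N.dm p (a i) = π.length := hπl.symm
        omega
    rw [hd, hmin]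
    omega
  · -- longest distance to w
    set P : Set ℕ := {n | ∃ q : N.G.Walk (N.leaf p) w, q.IsPath ∧ q.length = n} with hPdef
    have hEq : ldistV (N.G.induce S) ⟨N.leaf p, hp⟩ ⟨w, hwS⟩ = sSup P :=
      congrArg sSup (lengthSet_eq hS hp hwS)
    have hPne : P.Nonempty := by
      obtain ⟨π, hπp, _⟩ := N.conn.exists_path_of_dist (N.leaf p) w
      exact ⟨π.length, π, hπp, rfl⟩
    have hAdef : ∀ i : Fin k, N.dl p (a i) =
        sSup {n | ∃ q : N.G.Walk (N.leaf p) (N.leaf (a i)), q.IsPath ∧ q.length = n} :=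
      fun i => rfl
    have hsplit : ∀ (i : Fin k) (n : ℕ),
        n ∈ {n | ∃ q : N.G.Walk (N.leaf p) (N.leaf (a i)), q.IsPath ∧ q.length = n} →
        ∃ m ∈ P, n ≤ m + (k + 1) := by
      rintro i n ⟨π, hπp, rfl⟩
      have hwmem : w ∈ π.support := by
        have := claimC hclosed hnbr π.reverse (Or.inr ⟨i, rfl⟩) hp
        rwa [Walk.support_reverse, List.mem_reverse] at this
      have hsum : (π.takeUntil w hwmem).length + (π.dropUntil w hwmem).length
          = π.length := by
        have := congrArg Walk.length (π.take_spec hwmem)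
        rwa [Walk.length_append] at this
      have htp : (π.takeUntil w hwmem).IsPath := hπp.takeUntil _
      have hrp : (π.dropUntil w hwmem).IsPath := hπp.dropUntil _
      obtain ⟨u1, hadj1, ρ, hρ⟩ :=
        Walk.exists_eq_cons_of_ne (Ne.symm (hwa i)) (π.dropUntil w hwmem).reverse
      have hu1 : u1 = v i := hnbr i hadj1
      subst hu1
      have hρp : ρ.IsPath := by
        have := hrp.reverse
        rw [hρ] at this
        exact this.of_cons
      have hρl : ρ.length ≤ k := by
        have := (claimD hvw hclosed hnbr hwa ρ.length (i : ℕ) i.isLt ρ rfl hρp).2.2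
        have hik := i.isLt
        omega
      have hrl : (π.dropUntil w hwmem).length = ρ.length + 1 := by
        have := congrArg Walk.length hρ
        simp only [Walk.length_reverse, Walk.length_cons] at this
        omega
      exact ⟨(π.takeUntil w hwmem).length, ⟨_, htp, rfl⟩, by omega⟩
    have hext : ∀ (i : Fin k) (m : ℕ), m ∈ P → m + (k - (i : ℕ) + 1) ∈
        {n | ∃ q : N.G.Walk (N.leaf p) (N.leaf (a i)), q.IsPath ∧ q.length = n} := by
      rintro i m ⟨π, hπp, rfl⟩
      obtain ⟨E, hEl, hEp, hEs⟩ := EWalk hk hvinj hvw hwl hchain hleaf hwa hvl i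
      refine ⟨π.append E, ?_, by simp [Walk.length_append, hEl]⟩
      rw [Walk.isPath_def, Walk.support_append, List.nodup_append]
      refine ⟨(Walk.isPath_def _).mp hπp, ((Walk.isPath_def _).mp hEp).sublist
        (List.tail_sublist _), ?_⟩
      intro z hz z' hz2 hzz'
      subst hzz'
      have hzS : z ∈ S := hS _ _ hp hwS π hπp z hz
      have hzw : z ≠ w := by
        intro hzw
        subst hzw
        have hnd := (Walk.isPath_def _).mp hEp
        rw [E.support_eq_cons] at hnd
        exact (List.nodup_cons.mp hnd).1 hz2
      rcases hEs z (List.mem_of_mem_tail hz2) with rfl | ⟨m', rfl⟩ | rfl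
      · exact hzw rfl
      · exact hzS.1 m' rfl
      · exact hzS.2 i rfl
    by_cases hbdd : BddAbove P
    · have hLmem : sSup P ∈ P := Nat.sSup_mem hPne hbdd
      have hub : ∀ i : Fin k, N.dl p (a i) ≤ sSup P + (k + 1) := by
        intro i
        rw [hAdef i]
        refine csSup_le ⟨_, hext i _ hLmem⟩ fun n hn => ?_
        obtain ⟨m, hm, hle⟩ := hsplit i n hn
        exact hle.trans (Nat.add_le_add_right (le_csSup hbdd hm) _)
      have hlb : sSup P + (k + 1) ≤ N.dl p (a ⟨0, by omega⟩) := by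
        rw [hAdef ⟨0, by omega⟩]
        have hmem := hext ⟨0, by omega⟩ _ hLmem
        have hbd : BddAbove {n | ∃ q : N.G.Walk (N.leaf p)
            (N.leaf (a ⟨0, by omega⟩)), q.IsPath ∧ q.length = n} := by
          refine ⟨sSup P + (k + 1), fun n hn => ?_⟩
          obtain ⟨m, hm, hle⟩ := hsplit _ n hn
          exact hle.trans (Nat.add_le_add_right (le_csSup hbdd hm) _)
        have : sSup P + (k - (0 : ℕ) + 1) = sSup P + (k + 1) := by omega
        exact this ▸ le_csSup hbd hmem
      have hsup : (⨆ i : Fin k, N.dl p (a i)) = sSup P + (k + 1) :=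
        le_antisymm (ciSup_le hub)
          (hlb.trans (le_ciSup (f := fun i : Fin k => N.dl p (a i))
            (Set.finite_range _).bddAbove ⟨0, by omega⟩))
      rw [hEq, hsup]
      omega
    · have hP0 : sSup P = 0 := by
        rw [csSup_of_not_bddAbove hbdd, csSup_empty]
        rfl
      have hA0 : ∀ i : Fin k, N.dl p (a i) = 0 := by
        intro i
        rw [hAdef i]
        have : ¬ BddAbove {n | ∃ q : N.G.Walk (N.leaf p) (N.leaf (a i)),
            q.IsPath ∧ q.length = n} := by
          rintro ⟨B, hB⟩
          apply hbdd
          refine ⟨B, fun m hm => ?_⟩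
          have := hB (hext i m hm)
          omega
        rw [csSup_of_not_bddAbove this, csSup_empty]
        rfl
      rw [hEq, hP0]
      simp [hA0]
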